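/- Let M be a weight sequence satisfying (M.2) with constants C_0, H, let h, κ > 0, and let E be a Banach space. Let f ∈ C^∞(ℝ^d;E) satisfy ‖f‖_{κ,h} := sup_α sup_x h^{|α|}‖∂^α f(x)‖_E e^{−κ|x|}/M_α < ∞, and let (g_α)_{α∈ℕ^d} be a family of continuous functions on ℝ^d with S := Σ_{α∈ℕ^d} M_α ‖g_α e^{κ|·|}‖_{L¹} (H/h)^{|α|} < ∞. Then the series F(x) := Σ_{α∈ℕ^d} ∫_{ℝ^d} g_α(t) ∂^α f(x−t) dt converges absolutely for every x, F ∈ C^∞(ℝ^d;E), and ‖F‖_{κ,h/H} := sup_α sup_x (h/H)^{|α|}‖∂^α F(x)‖_E e^{−κ|x|}/M_α ≤ C_0 S ‖f‖_{κ,h}. -/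

import Mathlib

open Filter MeasureTheory
open scoped BigOperators

noncomputable section

abbrev Rd (d : ℕ) := EuclideanSpace ℝ (Fin d)

/-- Partial derivative in the `j`-th coordinate direction. -/
def dop {d : ℕ} {E : Type*} [NormedAddCommGroup E] [NormedSpace ℝ E]
    (j : Fin d) (f : Rd d → E) : Rd d → E :=
  fun x => fderiv ℝ f x (EuclideanSpace.single j (1:ℝ))

/-- Iterated partial derivative `∂^α` for a multi-index `α : Fin d → ℕ`. -/
def pD {d : ℕ} {E : Type*} [NormedAddCommGroup E] [NormedSpace ℝ E]
    (α : Fin d → ℕ) (f : Rd d → E) : Rd d → E :=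
  (List.finRange d).foldr (fun j g => (dop j)^[α j] g) f

/-- Length `|α|` of a multi-index. -/
def msize {d : ℕ} (α : Fin d → ℕ) : ℕ := ∑ j, α j

/-- `M` is a weight sequence: positive, normalized, `M_p^{1/p} → ∞`, log-convex. -/
def IsWeightSeq (M : ℕ → ℝ) : Prop :=
  (∀ p, 0 < M p) ∧ M 0 = 1 ∧ M 1 = 1 ∧
  Tendsto (fun p : ℕ => (M p) ^ ((p : ℝ)⁻¹)) atTop atTop ∧
  ∀ p : ℕ, 1 ≤ p → (M p)^2 ≤ M (p-1) * M (p+1)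

/-- Condition (M.2) with explicit constants `C₀, H ≥ 1`. -/
def HasM2 (M : ℕ → ℝ) (C₀ H : ℝ) : Prop :=
  1 ≤ C₀ ∧ 1 ≤ H ∧ ∀ p q : ℕ, M (p+q) ≤ C₀ * H^(p+q) * M p * M q

/-- Condition (M.2). -/
def M2 (M : ℕ → ℝ) : Prop := ∃ C₀ H, HasM2 M C₀ H

/-- Condition (M.2)*: `2 m_p ≤ m_{Np}` for `p ≥ p₀`. -/
def M2star (M : ℕ → ℝ) : Prop :=
  ∃ p₀ N : ℕ, 0 < p₀ ∧ 0 < N ∧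
    ∀ p, p₀ ≤ p → 2 * (M p / M (p-1)) ≤ M (N*p) / M (N*p - 1)

/-- Associated function `ν_M(t) = sup_p log(t^p / M_p)`. -/
def nuA (M : ℕ → ℝ) (t : ℝ) : ℝ := ⨆ p : ℕ, Real.log (t ^ p / M p)

open Metric

set_option linter.unusedSectionVars false
set_option linter.unusedTactic false
set_option maxHeartbeats 2000000
set_option synthInstance.maxHeartbeats 1000000

section AuxLemmas

variable {d : ℕ} {E : Type*} [NormedAddCommGroup E] [NormedSpace ℝ E]

lemma dop_contDiff {f : Rd d → E} (hf : ContDiff ℝ (⊤ : ℕ∞) f) (j : Fin d) :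
    ContDiff ℝ (⊤ : ℕ∞) (dop j f) := by
  have h1 : ContDiff ℝ (⊤ : ℕ∞) (fderiv ℝ f) := hf.fderiv_right (by simp)
  exact (ContinuousLinearMap.apply ℝ E (EuclideanSpace.single j (1:ℝ))).contDiff.comp h1

lemma iter_dop_contDiff {f : Rd d → E} (hf : ContDiff ℝ (⊤ : ℕ∞) f) (j : Fin d) (n : ℕ) :
    ContDiff ℝ (⊤ : ℕ∞) ((dop j)^[n] f) := by
  induction n with
  | zero => simpa using hf
  | succ n ih => rw [Function.iterate_succ_apply']; exact dop_contDiff ih j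

lemma dop_comm {f : Rd d → E} (hf : ContDiff ℝ (⊤ : ℕ∞) f) (i j : Fin d) :
    dop i (dop j f) = dop j (dop i f) := by
  funext x
  have hd : Differentiable ℝ f := hf.differentiable (by simp)
  have h1 : ∀ y, HasFDerivAt f (fderiv ℝ f y) y := fun y => (hd y).hasFDerivAt
  have hfd : ContDiff ℝ (⊤ : ℕ∞) (fderiv ℝ f) := hf.fderiv_right (by simp)
  have h2 : HasFDerivAt (fderiv ℝ f) (fderiv ℝ (fderiv ℝ f) x) x :=
    ((hfd.differentiable (by simp)) x).hasFDerivAt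
  have hsymm := second_derivative_symmetric h1 h2
  have key : ∀ v w : Rd d,
      fderiv ℝ (fun y => fderiv ℝ f y w) x v = fderiv ℝ (fderiv ℝ f) x v w := by
    intro v w
    have := fderiv_clm_apply ((hfd.differentiable (by simp)) x)
      (differentiableAt_const w)
    simp only [fderiv_fun_const] at this
    rw [this]
    simp
  show fderiv ℝ (fun y => fderiv ℝ f y (EuclideanSpace.single j (1:ℝ))) x
      (EuclideanSpace.single i (1:ℝ)) = _
  rw [key, hsymm, ← key]
  rfl

lemma dop_iter_comm {f : Rd d → E} (hf : ContDiff ℝ (⊤ : ℕ∞) f) (i j : Fin d) (n : ℕ) :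
    dop i ((dop j)^[n] f) = (dop j)^[n] (dop i f) := by
  induction n with
  | zero => rfl
  | succ n ih =>
    rw [Function.iterate_succ_apply', Function.iterate_succ_apply',
      dop_comm (iter_dop_contDiff hf j n) i j, ih]

lemma foldr_contDiff (β : Fin d → ℕ) (l : List (Fin d)) {f : Rd d → E}
    (hf : ContDiff ℝ (⊤ : ℕ∞) f) :
    ContDiff ℝ (⊤ : ℕ∞) (l.foldr (fun j g => (dop j)^[β j] g) f) := by
  induction l with
  | nil => exact hf
  | cons a l ih => exact iter_dop_contDiff ih a (β a)

lemma dop_foldr (β : Fin d → ℕ) (l : List (Fin d)) {f : Rd d → E}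
    (hf : ContDiff ℝ (⊤ : ℕ∞) f) (j : Fin d) :
    dop j (l.foldr (fun i g => (dop i)^[β i] g) f)
      = l.foldr (fun i g => (dop i)^[β i] g) (dop j f) := by
  induction l with
  | nil => rfl
  | cons a l ih =>
    simp only [List.foldr_cons]
    rw [dop_iter_comm (foldr_contDiff β l hf) j a (β a), ih]

lemma iter_dop_foldr (β : Fin d → ℕ) (l : List (Fin d)) {f : Rd d → E}
    (hf : ContDiff ℝ (⊤ : ℕ∞) f) (j : Fin d) (n : ℕ) :
    (dop j)^[n] (l.foldr (fun i g => (dop i)^[β i] g) f)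
      = l.foldr (fun i g => (dop i)^[β i] g) ((dop j)^[n] f) := by
  induction n with
  | zero => rfl
  | succ n ih =>
    rw [Function.iterate_succ_apply', ih, dop_foldr β l (iter_dop_contDiff hf j n) j,
      Function.iterate_succ_apply']

lemma foldr_add (β γ : Fin d → ℕ) (l : List (Fin d)) {f : Rd d → E}
    (hf : ContDiff ℝ (⊤ : ℕ∞) f) :
    l.foldr (fun i g => (dop i)^[β i + γ i] g) f
      = l.foldr (fun i g => (dop i)^[β i] g)
          (l.foldr (fun i g => (dop i)^[γ i] g) f) := by
  induction l with
  | nil => rfl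
  | cons a l ih =>
    simp only [List.foldr_cons]
    rw [ih, Function.iterate_add_apply]
    congr 1
    rw [iter_dop_foldr β l (foldr_contDiff γ l hf) a (γ a)]

lemma foldr_not_mem (j : Fin d) (l : List (Fin d)) (hj : j ∉ l) (f : Rd d → E) :
    l.foldr (fun i g => (dop i)^[(Pi.single j 1 : Fin d → ℕ) i] g) f = f := by
  induction l with
  | nil => rfl
  | cons a l ih =>
    simp only [List.foldr_cons]
    rw [Pi.single_apply, if_neg (by rintro rfl; exact hj List.mem_cons_self)]
    exact ih (fun h => hj (List.mem_cons_of_mem _ h))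

lemma foldr_single (j : Fin d) (l : List (Fin d)) (hl : l.Nodup) (hj : j ∈ l) (f : Rd d → E) :
    l.foldr (fun i g => (dop i)^[(Pi.single j 1 : Fin d → ℕ) i] g) f = dop j f := by
  induction l with
  | nil => simp at hj
  | cons a l ih =>
    rcases List.nodup_cons.1 hl with ⟨ha, hl'⟩
    simp only [List.foldr_cons]
    by_cases haj : a = j
    · subst haj
      rw [foldr_not_mem a l ha f]
      simp
    · rw [Pi.single_apply, if_neg haj]
      exact ih hl' ((List.mem_cons.1 hj).resolve_left (fun (h : j = a) => haj h.symm))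

lemma pD_contDiff (β : Fin d → ℕ) {f : Rd d → E} (hf : ContDiff ℝ (⊤ : ℕ∞) f) :
    ContDiff ℝ (⊤ : ℕ∞) (pD β f) := foldr_contDiff β _ hf

lemma pD_continuous (β : Fin d → ℕ) {f : Rd d → E} (hf : ContDiff ℝ (⊤ : ℕ∞) f) :
    Continuous (pD β f) := (pD_contDiff β hf).continuous

/-- `∂_j ∂^γ f = ∂^{γ + e_j} f` for smooth `f`. -/
lemma dop_pD {f : Rd d → E} (hf : ContDiff ℝ (⊤ : ℕ∞) f) (γ : Fin d → ℕ) (j : Fin d) :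
    dop j (pD γ f) = pD (γ + Pi.single j 1) f := by
  show dop j ((List.finRange d).foldr (fun i g => (dop i)^[γ i] g) f) = _
  have h1 : pD (γ + Pi.single j 1) f
      = (List.finRange d).foldr (fun i g => (dop i)^[γ i + (Pi.single j 1 : Fin d → ℕ) i] g) f := by
    rfl
  rw [dop_foldr γ _ hf j, h1, foldr_add γ (Pi.single j 1) _ hf,
    foldr_single j _ (List.nodup_finRange d) (List.mem_finRange j) f]

/-- Generic fold lemma: if a family `V` satisfies `dop j (V γ) = V (γ + e_j)`,
then `pD β (V γ) = V (γ + β)`. -/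
lemma pD_family {V : (Fin d → ℕ) → Rd d → E}
    (hV : ∀ γ j, dop j (V γ) = V (γ + Pi.single j 1)) (γ β : Fin d → ℕ) :
    pD β (V γ) = V (γ + β) := by
  have hiter : ∀ (γ : Fin d → ℕ) (j : Fin d) (n : ℕ),
      (dop j)^[n] (V γ) = V (γ + Pi.single j n) := by
    intro γ j n
    induction n generalizing γ with
    | zero => simp
    | succ n ih =>
      rw [Function.iterate_succ_apply, hV, ih, add_assoc, ← Pi.single_add, add_comm 1 n]
  have key : ∀ l : List (Fin d),
      l.foldr (fun i g => (dop i)^[β i] g) (V γ)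
        = V (γ + (l.map (fun j => Pi.single j (β j))).sum) := by
    intro l
    induction l with
    | nil => simp
    | cons a l ih =>
      simp only [List.foldr_cons, List.map_cons, List.sum_cons, ih, hiter]
      rw [add_assoc, add_comm ((List.map (fun j => Pi.single j (β j)) l).sum)]
  show (List.finRange d).foldr (fun i g => (dop i)^[β i] g) (V γ) = _
  rw [key]
  congr 1
  have : ((List.finRange d).map (fun j => Pi.single j (β j))).sum
      = ∑ j : Fin d, Pi.single j (β j) := (Fin.sum_univ_def _).symm
  rw [this, Finset.univ_sum_single]

/-- decomposition of a continuous linear map on `Rd d` -/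
lemma clm_decomp (L : Rd d →L[ℝ] E) :
    L = ∑ j : Fin d, (EuclideanSpace.proj (𝕜 := ℝ) j).smulRight (L (EuclideanSpace.single j 1)) := by
  ext v
  have hv : v = ∑ j : Fin d, v j • EuclideanSpace.single j (1:ℝ) := by
    ext i
    rw [WithLp.ofLp_sum, Finset.sum_apply]
    simp [EuclideanSpace.single_apply]
  conv_lhs => rw [hv]
  rw [_root_.map_sum, ContinuousLinearMap.sum_apply]
  refine Finset.sum_congr rfl fun j _ => ?_
  rw [ContinuousLinearMap.map_smul, ContinuousLinearMap.smulRight_apply]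
  rfl

lemma proj_norm_le_one (j : Fin d) :
    ‖(EuclideanSpace.proj (𝕜 := ℝ) j : Rd d →L[ℝ] ℝ)‖ ≤ 1 := by
  refine ContinuousLinearMap.opNorm_le_bound _ zero_le_one fun v => ?_
  rw [one_mul]
  have : |v j| ≤ ‖v‖ := by
    rw [EuclideanSpace.norm_eq, ← Real.sqrt_sq_eq_abs]
    refine Real.sqrt_le_sqrt ?_
    simpa using Finset.single_le_sum (f := fun i => ‖v i‖^2)
      (fun i _ => sq_nonneg _) (Finset.mem_univ j)
  exact this

lemma clm_norm_le (L : Rd d →L[ℝ] E) :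
    ‖L‖ ≤ ∑ j : Fin d, ‖L (EuclideanSpace.single j 1)‖ := by
  conv_lhs => rw [clm_decomp L]
  refine (norm_sum_le _ _).trans (Finset.sum_le_sum fun j _ => ?_)
  refine (ContinuousLinearMap.norm_smulRight_apply _ _).le.trans ?_
  nlinarith [norm_nonneg (L (EuclideanSpace.single j (1:ℝ))), proj_norm_le_one (d := d) j]

lemma family_contDiff {V : (Fin d → ℕ) → Rd d → E}
    (hd : ∀ γ x, HasFDerivAt (V γ)
      (∑ j : Fin d, (EuclideanSpace.proj (𝕜 := ℝ) j).smulRight (V (γ + Pi.single j 1) x)) x) :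
    ∀ γ, ContDiff ℝ (⊤ : ℕ∞) (V γ) := by
  have key : ∀ n : ℕ, ∀ γ, ContDiff ℝ (n : WithTop ℕ∞) (V γ) := by
    intro n
    induction n with
    | zero =>
      intro γ
      exact contDiff_zero.2 (Differentiable.continuous (fun x => (hd γ x).differentiableAt))
    | succ n ih =>
      intro γ
      have hcast : ((n + 1 : ℕ) : WithTop ℕ∞) = (n : WithTop ℕ∞) + 1 := by push_cast; rfl
      rw [hcast, contDiff_succ_iff_fderiv]
      refine ⟨fun x => (hd γ x).differentiableAt, by simp, ?_⟩
      have heq : fderiv ℝ (V γ) = fun x =>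
          ∑ j : Fin d, (EuclideanSpace.proj (𝕜 := ℝ) j).smulRight (V (γ + Pi.single j 1) x) := by
        funext x; exact (hd γ x).fderiv
      rw [heq]
      exact ContDiff.sum fun j _ =>
        ((ContinuousLinearMap.smulRightL ℝ (Rd d) E (EuclideanSpace.proj j)).contDiff).comp
          (ih (γ + Pi.single j 1))
  intro γ
  rw [contDiff_infty]
  intro n
  exact key n γ

lemma family_dop {V : (Fin d → ℕ) → Rd d → E}
    (hd : ∀ γ x, HasFDerivAt (V γ)
      (∑ j : Fin d, (EuclideanSpace.proj (𝕜 := ℝ) j).smulRight (V (γ + Pi.single j 1) x)) x)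
    (γ : Fin d → ℕ) (j : Fin d) : dop j (V γ) = V (γ + Pi.single j 1) := by
  funext x
  show fderiv ℝ (V γ) x (EuclideanSpace.single j (1:ℝ)) = _
  rw [(hd γ x).fderiv]
  rw [ContinuousLinearMap.sum_apply]
  have : ∀ i : Fin d,
      ((EuclideanSpace.proj (𝕜 := ℝ) i).smulRight (V (γ + Pi.single i 1) x))
        (EuclideanSpace.single j (1:ℝ))
      = (if j = i then (1:ℝ) else 0) • V (γ + Pi.single i 1) x := by
    intro i
    rw [ContinuousLinearMap.smulRight_apply]
    congr 1
    show (EuclideanSpace.single j (1:ℝ)) i = _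
    rw [EuclideanSpace.single_apply]
    exact if_congr ⟨Eq.symm, Eq.symm⟩ rfl rfl
  rw [Finset.sum_congr rfl fun i _ => this i]
  simp


end AuxLemmas

section analytic
variable {d : ℕ} {E : Type*} [NormedAddCommGroup E] [NormedSpace ℂ E] [CompleteSpace E]
variable {f : Rd d → E} {g : Rd d → ℂ} {κ : ℝ} {C : ℕ → ℝ}

lemma msize_add {d : ℕ} (α β : Fin d → ℕ) : msize (α + β) = msize α + msize β := by
  simp [msize, Finset.sum_add_distrib]

lemma msize_single {d : ℕ} (j : Fin d) : msize (Pi.single j 1 : Fin d → ℕ) = 1 := by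
  simp [msize, Pi.single_apply]

lemma norm_le_ball {d : ℕ} {x x₀ : Rd d} (hx : x ∈ ball x₀ 1) : ‖x‖ ≤ ‖x₀‖ + 1 := by
  have h1 : ‖x‖ - ‖x₀‖ ≤ ‖x - x₀‖ := norm_sub_norm_le _ _
  have h2 : ‖x - x₀‖ < 1 := by rwa [mem_ball, dist_eq_norm] at hx
  linarith

lemma exp_conv_le (hκ : 0 < κ) {x : Rd d} (t : Rd d) {R : ℝ} (hx : ‖x‖ ≤ R) :
    Real.exp (κ * ‖x - t‖) ≤ Real.exp (κ * R) * Real.exp (κ * ‖t‖) := by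
  rw [← Real.exp_add]
  apply Real.exp_le_exp.2
  have h1 : ‖x - t‖ ≤ ‖x‖ + ‖t‖ := norm_sub_le _ _
  nlinarith

lemma integrand_bound (hκ : 0 < κ) (hC : ∀ n, 0 ≤ C n)
    (hptb : ∀ (δ : Fin d → ℕ) (y : Rd d), ‖pD δ f y‖ ≤ C (msize δ) * Real.exp (κ * ‖y‖))
    (δ : Fin d → ℕ) {x : Rd d} {R : ℝ} (hx : ‖x‖ ≤ R) (t : Rd d) :
    ‖g t • pD δ f (x - t)‖ ≤ (C (msize δ) * Real.exp (κ * R)) * (‖g t‖ * Real.exp (κ * ‖t‖)) := by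
  rw [norm_smul]
  have h1 := hptb δ (x - t)
  have h2 := exp_conv_le hκ t hx
  have hg : (0:ℝ) ≤ ‖g t‖ := norm_nonneg _
  have h3 : ‖pD δ f (x - t)‖ ≤ C (msize δ) * (Real.exp (κ * R) * Real.exp (κ * ‖t‖)) :=
    h1.trans (mul_le_mul_of_nonneg_left h2 (hC _))
  nlinarith [Real.exp_pos (κ * ‖t‖), Real.exp_pos (κ * R), mul_le_mul_of_nonneg_left h3 hg]

set_option linter.unusedSectionVars false
set_option synthInstance.maxHeartbeats 1000000
set_option maxHeartbeats 1000000

lemma conv_integrable (hκ : 0 < κ) (hC : ∀ n, 0 ≤ C n) (hf : ContDiff ℝ (⊤ : ℕ∞) f)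
    (hg : Continuous g) (hgint : Integrable (fun t : Rd d => ‖g t‖ * Real.exp (κ * ‖t‖)))
    (hptb : ∀ (δ : Fin d → ℕ) (y : Rd d), ‖pD δ f y‖ ≤ C (msize δ) * Real.exp (κ * ‖y‖))
    (δ : Fin d → ℕ) (x : Rd d) :
    Integrable (fun t : Rd d => g t • pD δ f (x - t)) := by
  refine Integrable.mono' (hgint.const_mul (C (msize δ) * Real.exp (κ * ‖x‖))) ?_ ?_
  · exact ((hg.smul ((pD_contDiff δ hf).continuous.comp
      (continuous_const.sub continuous_id)))).aestronglyMeasurable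
  · exact Eventually.of_forall fun t => integrand_bound hκ hC hptb δ le_rfl t

lemma conv_norm_integral_le (hκ : 0 < κ) (hC : ∀ n, 0 ≤ C n) (hf : ContDiff ℝ (⊤ : ℕ∞) f)
    (hg : Continuous g) (hgint : Integrable (fun t : Rd d => ‖g t‖ * Real.exp (κ * ‖t‖)))
    (hptb : ∀ (δ : Fin d → ℕ) (y : Rd d), ‖pD δ f y‖ ≤ C (msize δ) * Real.exp (κ * ‖y‖))
    (δ : Fin d → ℕ) (x : Rd d) :
    (∫ t : Rd d, ‖g t • pD δ f (x - t)‖) ≤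
      (C (msize δ) * Real.exp (κ * ‖x‖)) * ∫ t : Rd d, ‖g t‖ * Real.exp (κ * ‖t‖) := by
  rw [← integral_const_mul]
  refine integral_mono (conv_integrable hκ hC hf hg hgint hptb δ x).norm
    (hgint.const_mul _) ?_
  exact fun t => integrand_bound hκ hC hptb δ le_rfl t

/-- differentiation under the integral sign for the convolution -/
lemma conv_hasFDerivAt (hκ : 0 < κ) (hC : ∀ n, 0 ≤ C n) (hf : ContDiff ℝ (⊤ : ℕ∞) f)
    (hg : Continuous g) (hgint : Integrable (fun t : Rd d => ‖g t‖ * Real.exp (κ * ‖t‖)))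
    (hptb : ∀ (δ : Fin d → ℕ) (y : Rd d), ‖pD δ f y‖ ≤ C (msize δ) * Real.exp (κ * ‖y‖))
    (δ : Fin d → ℕ) (x₀ : Rd d) :
    HasFDerivAt (fun x : Rd d => ∫ t : Rd d, g t • pD δ f (x - t))
      (∑ j : Fin d, (EuclideanSpace.proj (𝕜 := ℝ) j).smulRight
        (∫ t : Rd d, g t • pD (δ + Pi.single j 1) f (x₀ - t))) x₀ := by
  have hsm := pD_contDiff δ hf
  have hfd : ContDiff ℝ (⊤ : ℕ∞) (fderiv ℝ (pD δ f)) := hsm.fderiv_right (by simp)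
  -- the pointwise derivative
  have hdiff : ∀ (t : Rd d) (x : Rd d),
      HasFDerivAt (fun x : Rd d => g t • pD δ f (x - t))
        (g t • fderiv ℝ (pD δ f) (x - t)) x := by
    intro t x
    have h1 : HasFDerivAt (fun x : Rd d => pD δ f (x - t)) (fderiv ℝ (pD δ f) (x - t)) x := by
      have h2 := ((hsm.differentiable (by simp)) (x - t)).hasFDerivAt
      have h3 := h2.comp x ((hasFDerivAt_id x).sub_const t)
      exact h3
    exact h1.const_smul (g t)
  -- the norm bound for the derivative, on ball x₀ 1
  have hbnd : ∀ (t : Rd d) (x : Rd d), ‖x‖ ≤ ‖x₀‖ + 1 →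
      ‖g t • fderiv ℝ (pD δ f) (x - t)‖ ≤
        ((d : ℝ) * C (msize δ + 1) * Real.exp (κ * (‖x₀‖ + 1))) *
          (‖g t‖ * Real.exp (κ * ‖t‖)) := by
    intro t x hx
    refine (norm_smul_le (g t) (fderiv ℝ (pD δ f) (x - t))).trans ?_
    have h2 : ‖fderiv ℝ (pD δ f) (x - t)‖ ≤
        (d : ℝ) * (C (msize δ + 1) * Real.exp (κ * ‖x - t‖)) := by
      refine (clm_norm_le _).trans ?_
      have h3 : ∀ j : Fin d, ‖fderiv ℝ (pD δ f) (x - t) (EuclideanSpace.single j 1)‖ ≤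
          C (msize δ + 1) * Real.exp (κ * ‖x - t‖) := by
        intro j
        have h4 : fderiv ℝ (pD δ f) (x - t) (EuclideanSpace.single j 1)
            = pD (δ + Pi.single j 1) f (x - t) := by
          have := congrFun (dop_pD hf δ j) (x - t)
          exact this
        rw [h4]
        have := hptb (δ + Pi.single j 1) (x - t)
        rwa [msize_add, msize_single] at this
      calc ∑ j : Fin d, ‖fderiv ℝ (pD δ f) (x - t) (EuclideanSpace.single j 1)‖
          ≤ ∑ _j : Fin d, C (msize δ + 1) * Real.exp (κ * ‖x - t‖) :=
            Finset.sum_le_sum fun j _ => h3 j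
        _ = (d : ℝ) * (C (msize δ + 1) * Real.exp (κ * ‖x - t‖)) := by
            simp [Finset.sum_const, nsmul_eq_mul]
    have h5 : Real.exp (κ * ‖x - t‖) ≤ Real.exp (κ * (‖x₀‖ + 1)) * Real.exp (κ * ‖t‖) :=
      exp_conv_le hκ t hx
    have hgt : (0:ℝ) ≤ ‖g t‖ := norm_nonneg _
    have hd0 : (0:ℝ) ≤ (d : ℝ) := Nat.cast_nonneg d
    have h6 : ‖fderiv ℝ (pD δ f) (x - t)‖ ≤
        (d : ℝ) * (C (msize δ + 1) * (Real.exp (κ * (‖x₀‖ + 1)) * Real.exp (κ * ‖t‖))) := by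
      refine h2.trans ?_
      have := mul_le_mul_of_nonneg_left h5 (hC (msize δ + 1))
      nlinarith
    calc ‖g t‖ * ‖fderiv ℝ (pD δ f) (x - t)‖
        ≤ ‖g t‖ * ((d : ℝ) * (C (msize δ + 1) * (Real.exp (κ * (‖x₀‖ + 1)) * Real.exp (κ * ‖t‖))))
          := mul_le_mul_of_nonneg_left h6 hgt
      _ = ((d : ℝ) * C (msize δ + 1) * Real.exp (κ * (‖x₀‖ + 1))) *
            (‖g t‖ * Real.exp (κ * ‖t‖)) := by ring
  -- derivative integrand is continuous hence a.e. strongly measurable, and integrable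
  have hF'cont : ∀ x : Rd d, Continuous (fun t : Rd d => g t • fderiv ℝ (pD δ f) (x - t)) :=
    fun x => hg.smul (hfd.continuous.comp (continuous_const.sub continuous_id))
  have hF'int : Integrable (fun t : Rd d => g t • fderiv ℝ (pD δ f) (x₀ - t)) := by
    refine Integrable.mono'
      (hgint.const_mul ((d : ℝ) * C (msize δ + 1) * Real.exp (κ * (‖x₀‖ + 1)))) ?_ ?_
    · exact (hF'cont x₀).aestronglyMeasurable
    · exact Eventually.of_forall fun t => hbnd t x₀ (by linarith [norm_nonneg x₀])
  have key := hasFDerivAt_integral_of_dominated_of_fderiv_le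
    (F := fun x t => g t • pD δ f (x - t))
    (F' := fun x t => g t • fderiv ℝ (pD δ f) (x - t))
    (bound := fun t => ((d : ℝ) * C (msize δ + 1) * Real.exp (κ * (‖x₀‖ + 1))) *
      (‖g t‖ * Real.exp (κ * ‖t‖)))
    (μ := volume) (x₀ := x₀) (ball_mem_nhds x₀ zero_lt_one)
    (Eventually.of_forall fun x => ((hg.smul ((pD_contDiff δ hf).continuous.comp
      (continuous_const.sub continuous_id)))).aestronglyMeasurable)
    (conv_integrable hκ hC hf hg hgint hptb δ x₀)
    ((hF'cont x₀).aestronglyMeasurable)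
    (Eventually.of_forall fun t => fun x hx => hbnd t x
      (norm_le_ball hx))
    (hgint.const_mul _)
    (Eventually.of_forall fun t => fun x _ => hdiff t x)
  -- now rewrite the derivative
  refine key.congr_fderiv (Eq.symm ?_)
  rw [clm_decomp (∫ t : Rd d, g t • fderiv ℝ (pD δ f) (x₀ - t))]
  refine Finset.sum_congr rfl fun j _ => ?_
  congr 1
  rw [ContinuousLinearMap.integral_apply hF'int]
  refine integral_congr_ae (Eventually.of_forall fun t => ?_)
  show g t • pD (δ + Pi.single j 1) f (x₀ - t)
      = (g t • fderiv ℝ (pD δ f) (x₀ - t)) (EuclideanSpace.single j 1)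
  rw [ContinuousLinearMap.smul_apply]
  congr 1
  exact (congrFun (dop_pD hf δ j) (x₀ - t)).symm


end analytic

/-- Convolution of an ultrapolynomial-type series of derivatives against a vector-valued
function in `𝒬^{M,h}_κ(ℝ^d;E)` (Proposition 5.7, Banach case): the series converges
absolutely, defines a smooth function, and satisfies the expected bound. -/
theorem stmt12 (d : ℕ) (M : ℕ → ℝ) (C₀ H : ℝ) (hM : IsWeightSeq M) (hM2 : HasM2 M C₀ H)
    (h κ : ℝ) (hh : 0 < h) (hκ : 0 < κ)
    {E : Type*} [NormedAddCommGroup E] [NormedSpace ℂ E] [CompleteSpace E]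
    (f : Rd d → E) (hf : ContDiff ℝ (⊤ : ℕ∞) f)
    (Cf : ℝ)
    (hfb : ∀ (α : Fin d → ℕ) (x : Rd d),
      h ^ msize α * ‖pD α f x‖ * Real.exp (-κ * ‖x‖) ≤ Cf * M (msize α))
    (gα : (Fin d → ℕ) → Rd d → ℂ) (hgc : ∀ α, Continuous (gα α))
    (hgint : ∀ α : Fin d → ℕ,
      Integrable (fun t : Rd d => ‖gα α t‖ * Real.exp (κ * ‖t‖)))
    (hS : Summable (fun α : Fin d → ℕ =>
      M (msize α) * (∫ t : Rd d, ‖gα α t‖ * Real.exp (κ * ‖t‖)) * (H / h) ^ msize α)) :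
    (∀ (α : Fin d → ℕ) (x : Rd d),
      Integrable (fun t : Rd d => gα α t • pD α f (x - t))) ∧
    (∀ x : Rd d, Summable (fun α : Fin d → ℕ =>
      ∫ t : Rd d, ‖gα α t • pD α f (x - t)‖)) ∧
    ContDiff ℝ (⊤ : ℕ∞)
      (fun x : Rd d => ∑' α : Fin d → ℕ, ∫ t : Rd d, gα α t • pD α f (x - t)) ∧
    ∀ (β : Fin d → ℕ) (x : Rd d),
      (h / H) ^ msize β *
          ‖pD β (fun y : Rd d =>
            ∑' α : Fin d → ℕ, ∫ t : Rd d, gα α t • pD α f (y - t)) x‖ *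
        Real.exp (-κ * ‖x‖) ≤
      C₀ * (∑' α : Fin d → ℕ,
          M (msize α) * (∫ t : Rd d, ‖gα α t‖ * Real.exp (κ * ‖t‖)) * (H / h) ^ msize α) *
        Cf * M (msize β) := by
  obtain ⟨hMpos, hM0, hM1, -, -⟩ := hM
  obtain ⟨hC₀, hH, hM2'⟩ := hM2
  have hH0 : (0:ℝ) < H := lt_of_lt_of_le one_pos hH
  -- `Cf` is nonnegative
  have hCf0 : 0 ≤ Cf := by
    have h1 := hfb 0 0
    have h2 : (0:ℝ) ≤ h ^ msize (0 : Fin d → ℕ) * ‖pD (0 : Fin d → ℕ) f (0 : Rd d)‖ *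
        Real.exp (-κ * ‖(0 : Rd d)‖) := by positivity
    have h3 : msize (0 : Fin d → ℕ) = 0 := by simp [msize]
    rw [h3, hM0, mul_one] at h1
    rw [h3] at h2
    linarith
  -- the pointwise bound constants
  set C : ℕ → ℝ := fun n => Cf * M n * (h⁻¹) ^ n with hCdef
  have hCnn : ∀ n, 0 ≤ C n := fun n => by
    have := (hMpos n).le
    positivity
  have hptb : ∀ (δ : Fin d → ℕ) (y : Rd d), ‖pD δ f y‖ ≤ C (msize δ) * Real.exp (κ * ‖y‖) := by
    intro δ y
    have k1 : h ^ msize δ * (h⁻¹) ^ msize δ = 1 := by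
      rw [← mul_pow, mul_inv_cancel₀ (ne_of_gt hh), one_pow]
    have k2 : Real.exp (-κ * ‖y‖) * Real.exp (κ * ‖y‖) = 1 := by
      rw [← Real.exp_add, neg_mul, neg_add_cancel, Real.exp_zero]
    have e1 : h ^ msize δ * ‖pD δ f y‖ * Real.exp (-κ * ‖y‖) *
        ((h⁻¹) ^ msize δ * Real.exp (κ * ‖y‖))
        = ‖pD δ f y‖ * (h ^ msize δ * (h⁻¹) ^ msize δ) *
          (Real.exp (-κ * ‖y‖) * Real.exp (κ * ‖y‖)) := by ring
    have e2 := mul_le_mul_of_nonneg_right (hfb δ y)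
      (by positivity : (0:ℝ) ≤ (h⁻¹) ^ msize δ * Real.exp (κ * ‖y‖))
    rw [e1, k1, k2, mul_one, mul_one] at e2
    calc ‖pD δ f y‖ ≤ Cf * M (msize δ) * ((h⁻¹) ^ msize δ * Real.exp (κ * ‖y‖)) := e2
      _ = C (msize δ) * Real.exp (κ * ‖y‖) := by rw [hCdef]; ring
  -- the key integral bound
  have hIb : ∀ (α γ : Fin d → ℕ) (x : Rd d),
      (∫ t : Rd d, ‖gα α t • pD (α + γ) f (x - t)‖) ≤
        (Cf * C₀ * M (msize γ) * (H / h) ^ msize γ * Real.exp (κ * ‖x‖)) *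
          (M (msize α) * (∫ t : Rd d, ‖gα α t‖ * Real.exp (κ * ‖t‖)) * (H / h) ^ msize α) := by
    intro α γ x
    have hI0 : 0 ≤ ∫ t : Rd d, ‖gα α t‖ * Real.exp (κ * ‖t‖) :=
      integral_nonneg fun t => by positivity
    calc (∫ t : Rd d, ‖gα α t • pD (α + γ) f (x - t)‖)
        ≤ (C (msize (α + γ)) * Real.exp (κ * ‖x‖)) *
            ∫ t : Rd d, ‖gα α t‖ * Real.exp (κ * ‖t‖) :=
          conv_norm_integral_le hκ hCnn hf (hgc α) (hgint α) hptb (α + γ) x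
      _ = Cf * M (msize α + msize γ) * (h⁻¹) ^ (msize α + msize γ) * Real.exp (κ * ‖x‖) *
            ∫ t : Rd d, ‖gα α t‖ * Real.exp (κ * ‖t‖) := by
          rw [hCdef, msize_add]
      _ ≤ Cf * (C₀ * H ^ (msize α + msize γ) * M (msize α) * M (msize γ)) *
            (h⁻¹) ^ (msize α + msize γ) * Real.exp (κ * ‖x‖) *
            ∫ t : Rd d, ‖gα α t‖ * Real.exp (κ * ‖t‖) := by
          gcongr
          exact hM2' (msize α) (msize γ)
      _ = (Cf * C₀ * M (msize γ) * (H / h) ^ msize γ * Real.exp (κ * ‖x‖)) *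
            (M (msize α) * (∫ t : Rd d, ‖gα α t‖ * Real.exp (κ * ‖t‖)) * (H / h) ^ msize α) := by
          rw [div_eq_mul_inv H h, mul_pow, mul_pow, pow_add, pow_add]
          ring
  have hvb : ∀ (α γ : Fin d → ℕ) (x : Rd d),
      ‖∫ t : Rd d, gα α t • pD (α + γ) f (x - t)‖ ≤
        (Cf * C₀ * M (msize γ) * (H / h) ^ msize γ * Real.exp (κ * ‖x‖)) *
          (M (msize α) * (∫ t : Rd d, ‖gα α t‖ * Real.exp (κ * ‖t‖)) * (H / h) ^ msize α) :=
    fun α γ x => (norm_integral_le_integral_norm _).trans (hIb α γ x)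
  -- summability
  have hsumN : ∀ (γ : Fin d → ℕ) (x : Rd d),
      Summable (fun α : Fin d → ℕ => ∫ t : Rd d, ‖gα α t • pD (α + γ) f (x - t)‖) :=
    fun γ x => Summable.of_nonneg_of_le
      (fun α => integral_nonneg fun t => norm_nonneg _) (fun α => hIb α γ x)
      (hS.mul_left _)
  have hsumv : ∀ (γ : Fin d → ℕ) (x : Rd d),
      Summable (fun α : Fin d → ℕ => ∫ t : Rd d, gα α t • pD (α + γ) f (x - t)) :=
    fun γ x => Summable.of_norm (Summable.of_nonneg_of_le
      (fun α => norm_nonneg _) (fun α => hvb α γ x) (hS.mul_left _))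
  -- the family of candidate derivatives
  have hVd : ∀ (γ : Fin d → ℕ) (x₀ : Rd d),
      HasFDerivAt (fun x : Rd d => ∑' α : Fin d → ℕ, ∫ t : Rd d, gα α t • pD (α + γ) f (x - t))
        (∑ j : Fin d, (EuclideanSpace.proj (𝕜 := ℝ) j).smulRight
          ((fun x => ∑' α : Fin d → ℕ,
            ∫ t : Rd d, gα α t • pD (α + (γ + Pi.single j 1)) f (x - t)) x₀)) x₀ := by
    intro γ x₀
    set R := ‖x₀‖ + 1 with hR
    have hkey := hasFDerivAt_tsum_of_isPreconnected
      (u := fun α : Fin d → ℕ => ((d : ℝ) *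
        (Cf * C₀ * M (msize γ + 1) * (H / h) ^ (msize γ + 1) * Real.exp (κ * R))) *
        (M (msize α) * (∫ t : Rd d, ‖gα α t‖ * Real.exp (κ * ‖t‖)) * (H / h) ^ msize α))
      (f := fun (α : Fin d → ℕ) (x : Rd d) => ∫ t : Rd d, gα α t • pD (α + γ) f (x - t))
      (f' := fun (α : Fin d → ℕ) (x : Rd d) =>
        ∑ j : Fin d, (EuclideanSpace.proj (𝕜 := ℝ) j).smulRight
          (∫ t : Rd d, gα α t • pD (α + (γ + Pi.single j 1)) f (x - t)))
      (s := ball (0 : Rd d) R) (x₀ := x₀) (x := x₀)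
      (hS.mul_left _) isOpen_ball (convex_ball _ _).isPreconnected
      ?_ ?_ ?_ (hsumv γ x₀) ?_
    · refine hkey.congr_fderiv (Eq.symm ?_)
      refine Eq.symm ?_
      show (∑' (α : Fin d → ℕ), ∑ j : Fin d, (EuclideanSpace.proj (𝕜 := ℝ) j).smulRight
          (∫ t : Rd d, gα α t • pD (α + (γ + Pi.single j 1)) f (x₀ - t)))
        = ∑ j : Fin d, (EuclideanSpace.proj (𝕜 := ℝ) j).smulRight
          (∑' (α : Fin d → ℕ), ∫ t : Rd d, gα α t • pD (α + (γ + Pi.single j 1)) f (x₀ - t))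
      have hsj : ∀ j : Fin d, Summable (fun α : Fin d → ℕ =>
          (EuclideanSpace.proj (𝕜 := ℝ) j).smulRight
            (∫ t : Rd d, gα α t • pD (α + (γ + Pi.single j 1)) f (x₀ - t))) := fun j =>
        (hsumv (γ + Pi.single j 1) x₀).mapL
          (ContinuousLinearMap.smulRightL ℝ (Rd d) E (EuclideanSpace.proj j))
      rw [Summable.tsum_finsetSum (fun j _ => hsj j)]
      refine Finset.sum_congr rfl fun j _ => ?_
      exact (ContinuousLinearMap.map_tsum
        (ContinuousLinearMap.smulRightL ℝ (Rd d) E (EuclideanSpace.proj j))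
        (hsumv (γ + Pi.single j 1) x₀)).symm
    · intro α x hx
      have := conv_hasFDerivAt hκ hCnn hf (hgc α) (hgint α) hptb (α + γ) x
      simpa only [add_assoc] using this
    · intro α x hx
      have hxR : ‖x‖ ≤ R := by
        rw [mem_ball_zero_iff] at hx
        exact hx.le
      refine (norm_sum_le _ _).trans ?_
      have hterm : ∀ j : Fin d,
          ‖(EuclideanSpace.proj (𝕜 := ℝ) j).smulRight
            (∫ t : Rd d, gα α t • pD (α + (γ + Pi.single j 1)) f (x - t))‖ ≤
          (Cf * C₀ * M (msize γ + 1) * (H / h) ^ (msize γ + 1) * Real.exp (κ * R)) *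
            (M (msize α) * (∫ t : Rd d, ‖gα α t‖ * Real.exp (κ * ‖t‖)) * (H / h) ^ msize α) := by
        intro j
        have h1 : ‖(EuclideanSpace.proj (𝕜 := ℝ) j).smulRight
            (∫ t : Rd d, gα α t • pD (α + (γ + Pi.single j 1)) f (x - t))‖ ≤
            ‖∫ t : Rd d, gα α t • pD (α + (γ + Pi.single j 1)) f (x - t)‖ := by
          rw [ContinuousLinearMap.norm_smulRight_apply]
          have := proj_norm_le_one (d := d) j
          nlinarith [norm_nonneg (∫ t : Rd d, gα α t • pD (α + (γ + Pi.single j 1)) f (x - t))]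
        refine h1.trans ((hvb α (γ + Pi.single j 1) x).trans ?_)
        rw [msize_add, msize_single]
        have hWnn : (0:ℝ) ≤ M (msize α) * (∫ t : Rd d, ‖gα α t‖ * Real.exp (κ * ‖t‖)) *
            (H / h) ^ msize α := by
          have := (hMpos (msize α)).le
          have hI0 : 0 ≤ ∫ t : Rd d, ‖gα α t‖ * Real.exp (κ * ‖t‖) :=
            integral_nonneg fun t => by positivity
          positivity
        have hexp : Real.exp (κ * ‖x‖) ≤ Real.exp (κ * R) :=
          Real.exp_le_exp.2 (by nlinarith)
        have hMg := (hMpos (msize γ + 1)).le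
        have hc : (0:ℝ) ≤ Cf * C₀ * M (msize γ + 1) * (H / h) ^ (msize γ + 1) := by positivity
        nlinarith [mul_le_mul_of_nonneg_left hexp hc,
          mul_le_mul_of_nonneg_right
            (mul_le_mul_of_nonneg_left hexp hc) hWnn]
      calc ∑ j : Fin d, ‖(EuclideanSpace.proj (𝕜 := ℝ) j).smulRight
            (∫ t : Rd d, gα α t • pD (α + (γ + Pi.single j 1)) f (x - t))‖
          ≤ ∑ _j : Fin d, (Cf * C₀ * M (msize γ + 1) * (H / h) ^ (msize γ + 1) *
              Real.exp (κ * R)) *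
            (M (msize α) * (∫ t : Rd d, ‖gα α t‖ * Real.exp (κ * ‖t‖)) * (H / h) ^ msize α) :=
            Finset.sum_le_sum fun j _ => hterm j
        _ = ((d : ℝ) * (Cf * C₀ * M (msize γ + 1) * (H / h) ^ (msize γ + 1) *
              Real.exp (κ * R))) *
            (M (msize α) * (∫ t : Rd d, ‖gα α t‖ * Real.exp (κ * ‖t‖)) * (H / h) ^ msize α) := by
            simp [Finset.sum_const, nsmul_eq_mul, mul_assoc]
    · exact mem_ball_zero_iff.2 (by linarith [norm_nonneg x₀])
    · exact mem_ball_zero_iff.2 (by linarith [norm_nonneg x₀])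
  -- the family of tsums and its smoothness
  have hsmoothV := family_contDiff
    (V := fun (γ : Fin d → ℕ) (x : Rd d) =>
      ∑' α : Fin d → ℕ, ∫ t : Rd d, gα α t • pD (α + γ) f (x - t)) hVd
  have hdopV := family_dop
    (V := fun (γ : Fin d → ℕ) (x : Rd d) =>
      ∑' α : Fin d → ℕ, ∫ t : Rd d, gα α t • pD (α + γ) f (x - t)) hVd
  have hFV : (fun x : Rd d => ∑' α : Fin d → ℕ, ∫ t : Rd d, gα α t • pD α f (x - t))
      = fun x : Rd d => ∑' α : Fin d → ℕ, ∫ t : Rd d, gα α t • pD (α + 0) f (x - t) := by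
    funext x
    exact tsum_congr fun α => by rw [add_zero]
  refine ⟨fun α x => conv_integrable hκ hCnn hf (hgc α) (hgint α) hptb α x,
    fun x => by simpa only [add_zero] using hsumN 0 x, ?_, ?_⟩
  · rw [hFV]
    exact hsmoothV 0
  · intro β x
    have hkey : pD β (fun y : Rd d => ∑' α : Fin d → ℕ, ∫ t : Rd d, gα α t • pD α f (y - t))
        = fun y : Rd d => ∑' α : Fin d → ℕ, ∫ t : Rd d, gα α t • pD (α + β) f (y - t) := by
      rw [hFV]
      have h2 := pD_family
        (V := fun (γ : Fin d → ℕ) (x : Rd d) =>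
          ∑' α : Fin d → ℕ, ∫ t : Rd d, gα α t • pD (α + γ) f (x - t)) hdopV 0 β
      exact h2.trans (by funext y; exact tsum_congr fun α => by rw [zero_add])
    rw [hkey]
    have hsum1 : Summable (fun α : Fin d → ℕ =>
        ‖∫ t : Rd d, gα α t • pD (α + β) f (x - t)‖) :=
      Summable.of_nonneg_of_le (fun α => norm_nonneg _) (fun α => hvb α β x) (hS.mul_left _)
    have hnorm : ‖∑' α : Fin d → ℕ, ∫ t : Rd d, gα α t • pD (α + β) f (x - t)‖ ≤
        (Cf * C₀ * M (msize β) * (H / h) ^ msize β * Real.exp (κ * ‖x‖)) *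
          ∑' α : Fin d → ℕ,
            M (msize α) * (∫ t : Rd d, ‖gα α t‖ * Real.exp (κ * ‖t‖)) * (H / h) ^ msize α := by
      refine (norm_tsum_le_tsum_norm hsum1).trans ?_
      rw [← tsum_mul_left]
      exact Summable.tsum_le_tsum (fun α => hvb α β x) hsum1 (hS.mul_left _)
    have hexpneg : (0:ℝ) < Real.exp (-κ * ‖x‖) := Real.exp_pos _
    have hpow : (0:ℝ) ≤ (h / H) ^ msize β := by positivity
    calc (h / H) ^ msize β * ‖∑' α : Fin d → ℕ, ∫ t : Rd d, gα α t • pD (α + β) f (x - t)‖ *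
          Real.exp (-κ * ‖x‖)
        ≤ (h / H) ^ msize β *
            ((Cf * C₀ * M (msize β) * (H / h) ^ msize β * Real.exp (κ * ‖x‖)) *
              ∑' α : Fin d → ℕ,
                M (msize α) * (∫ t : Rd d, ‖gα α t‖ * Real.exp (κ * ‖t‖)) * (H / h) ^ msize α) *
          Real.exp (-κ * ‖x‖) := by
          exact mul_le_mul_of_nonneg_right
            (mul_le_mul_of_nonneg_left hnorm hpow) hexpneg.le
      _ = C₀ * (∑' α : Fin d → ℕ,
            M (msize α) * (∫ t : Rd d, ‖gα α t‖ * Real.exp (κ * ‖t‖)) * (H / h) ^ msize α) *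
          Cf * M (msize β) := by
          have k1 : (h / H) ^ msize β * (H / h) ^ msize β = 1 := by
            rw [← mul_pow, div_mul_div_comm, mul_comm H h,
              div_self (ne_of_gt (by positivity)), one_pow]
          have k2 : Real.exp (κ * ‖x‖) * Real.exp (-κ * ‖x‖) = 1 := by
            rw [← Real.exp_add, neg_mul, add_neg_cancel, Real.exp_zero]
          have e3 : (h / H) ^ msize β *
              ((Cf * C₀ * M (msize β) * (H / h) ^ msize β * Real.exp (κ * ‖x‖)) *
                ∑' α : Fin d → ℕ,
                  M (msize α) * (∫ t : Rd d, ‖gα α t‖ * Real.exp (κ * ‖t‖)) * (H / h) ^ msize α) *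
              Real.exp (-κ * ‖x‖)
              = (C₀ * (∑' α : Fin d → ℕ,
                  M (msize α) * (∫ t : Rd d, ‖gα α t‖ * Real.exp (κ * ‖t‖)) * (H / h) ^ msize α) *
                Cf * M (msize β)) *
                ((h / H) ^ msize β * (H / h) ^ msize β) *
                (Real.exp (κ * ‖x‖) * Real.exp (-κ * ‖x‖)) := by ring
          rw [e3, k1, k2, mul_one, mul_one]
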